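/- arXiv:0808.3685 — 4 statements merged into one kernel-verified Lean document; each statement's English description precedes it below -/
import Mathlib

section
/- Let (λ_k)_{k≥1} be a strictly increasing sequence of positive reals, let β > 0 and Γ > 0, and let c = (c_k)_{k≥1} be a real sequence with Σ_k λ_k² c_k² < ∞. Suppose c satisfies, for every k, the equation β λ_k² c_k + (Σ_j λ_j c_j² − Γ) λ_k c_k = 0. Then either c_k = 0 for all k, or there exists exactly one index k with c_k ≠ 0; in the latter case necessarily Γ > β λ_k and c_k = ±√((Γ − β λ_k)/λ_k). In particular, if N₀ is the largest integer with Γ > β λ_{N₀}, the set of such sequences c is finite, consisting of the zero sequence and the 2N₀ sequences with a single nonzero entry c_k = ±√((Γ − β λ_k)/λ_k) for k = 1,…,N₀. -/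
private lemma berger_classify
    (lam : ℕ → ℝ) (hpos : ∀ k, 0 < lam k) (hmono : StrictMono lam)
    (β Γ : ℝ) (hβ : 0 < β)
    (c : ℕ → ℝ)
    (heq : ∀ k, β * lam k ^ 2 * c k + ((∑' j, lam j * c j ^ 2) - Γ) * (lam k * c k) = 0) :
    (∀ k, c k = 0) ∨
      ∃ k, c k ≠ 0 ∧ (∀ j, j ≠ k → c j = 0) ∧ β * lam k < Γ ∧
        (c k = Real.sqrt ((Γ - β * lam k) / lam k) ∨
          c k = -Real.sqrt ((Γ - β * lam k) / lam k)) := by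
  set S := ∑' j, lam j * c j ^ 2 with hS
  have key : ∀ k, c k ≠ 0 → β * lam k = Γ - S := by
    intro k hk
    have hfac : lam k * c k * (β * lam k + (S - Γ)) = 0 := by ring_nf; linarith [heq k]
    rcases mul_eq_zero.1 hfac with h1 | h2
    · rcases mul_eq_zero.1 h1 with h3 | h4
      · exact absurd h3 (ne_of_gt (hpos k))
      · exact absurd h4 hk
    · linarith
  by_cases hz : ∀ k, c k = 0
  · exact Or.inl hz
  · push_neg at hz
    obtain ⟨k, hk⟩ := hz
    have hsupp : ∀ j, j ≠ k → c j = 0 := by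
      intro j hj
      by_contra hcj
      have h1 := key j hcj
      have h2 := key k hk
      have hlam : lam j = lam k := mul_left_cancel₀ (ne_of_gt hβ) (by linarith)
      exact hj (hmono.injective hlam)
    refine Or.inr ⟨k, hk, hsupp, ?_, ?_⟩
    all_goals {
      have hStsum : S = lam k * c k ^ 2 := by
        rw [hS]
        exact tsum_eq_single k (fun j hj => by rw [hsupp j hj]; ring)
      have hkey := key k hk
      have hprod : lam k * c k ^ 2 = Γ - β * lam k := by linarith
      have h0 : 0 < c k ^ 2 := lt_of_le_of_ne (sq_nonneg _) (Ne.symm (pow_ne_zero 2 hk))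
      have hpos2 : 0 < Γ - β * lam k := by nlinarith [hpos k]
      have hck2 : c k ^ 2 = (Γ - β * lam k) / lam k := by
        rw [eq_div_iff (ne_of_gt (hpos k))]
        nlinarith
      first
      | linarith
      | { have habs : |c k| = Real.sqrt ((Γ - β * lam k) / lam k) := by
            rw [← hck2, Real.sqrt_sq_eq_abs]
          rcases abs_cases (c k) with ⟨h, _⟩ | ⟨h, _⟩
          · exact Or.inl (by rw [← habs, h])
          · exact Or.inr (by rw [← habs, h]; ring) } }

private lemma single_mem
    (lam : ℕ → ℝ) (β Γ : ℝ) (k : ℕ) (a : ℝ) (ha : lam k * a ^ 2 = Γ - β * lam k) :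
    (Summable fun j => lam j ^ 2 * (Pi.single k a : ℕ → ℝ) j ^ 2) ∧
    ∀ m, β * lam m ^ 2 * (Pi.single k a : ℕ → ℝ) m +
        ((∑' j, lam j * (Pi.single k a : ℕ → ℝ) j ^ 2) - Γ) *
          (lam m * (Pi.single k a : ℕ → ℝ) m) = 0 := by
  have htsum : (∑' j, lam j * (Pi.single k a : ℕ → ℝ) j ^ 2) = lam k * a ^ 2 := by
    rw [show lam k * a ^ 2 = lam k * (Pi.single k a : ℕ → ℝ) k ^ 2 by rw [Pi.single_eq_same]]
    exact tsum_eq_single k (fun j hj => by rw [Pi.single_eq_of_ne hj]; ring)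
  constructor
  · apply summable_of_ne_finset_zero (s := {k})
    intro b hb
    rw [Pi.single_eq_of_ne (by simpa using hb)]
    ring
  · intro m
    by_cases hm : m = k
    · subst hm
      rw [Pi.single_eq_same, htsum, ha]
      ring
    · rw [Pi.single_eq_of_ne hm]
      ring

/-- Classification of stationary points of the Berger plate with `M(z) = z − Γ`, `p = 0`,
in eigenbasis coordinates: a square-summable (with weight `λ_k²`) solution of
`β λ_k² c_k + (Σ_j λ_j c_j² − Γ) λ_k c_k = 0` is either zero or has exactly one nonzero
entry `c_k = ±√((Γ − βλ_k)/λ_k)`, possible only when `Γ > βλ_k`; and if `N₀` is the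
largest index with `Γ > βλ_{N₀}`, the set of all such sequences is exactly the zero
sequence together with the finitely many single-entry sequences, in particular finite. -/
theorem stmt_8
    (lam : ℕ → ℝ) (hpos : ∀ k, 0 < lam k) (hmono : StrictMono lam)
    (β Γ : ℝ) (hβ : 0 < β) (hΓ : 0 < Γ)
    (c : ℕ → ℝ) (hsum : Summable fun k => lam k ^ 2 * c k ^ 2)
    (heq : ∀ k, β * lam k ^ 2 * c k + ((∑' j, lam j * c j ^ 2) - Γ) * (lam k * c k) = 0) :
    ((∀ k, c k = 0) ∨
      ∃ k, c k ≠ 0 ∧ (∀ j, j ≠ k → c j = 0) ∧ β * lam k < Γ ∧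
        (c k = Real.sqrt ((Γ - β * lam k) / lam k) ∨
          c k = -Real.sqrt ((Γ - β * lam k) / lam k))) ∧
    ∀ N₀ : ℕ, (∀ k, β * lam k < Γ ↔ k ≤ N₀) →
      ({c' : ℕ → ℝ | (Summable fun k => lam k ^ 2 * c' k ^ 2) ∧
          ∀ k, β * lam k ^ 2 * c' k + ((∑' j, lam j * c' j ^ 2) - Γ) * (lam k * c' k) = 0}
        = insert (0 : ℕ → ℝ)
            {c' : ℕ → ℝ | ∃ k ≤ N₀,
              c' = Pi.single k (Real.sqrt ((Γ - β * lam k) / lam k)) ∨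
              c' = Pi.single k (-Real.sqrt ((Γ - β * lam k) / lam k))}) ∧
      Set.Finite {c' : ℕ → ℝ | (Summable fun k => lam k ^ 2 * c' k ^ 2) ∧
          ∀ k, β * lam k ^ 2 * c' k + ((∑' j, lam j * c' j ^ 2) - Γ) * (lam k * c' k) = 0} := by
  refine ⟨berger_classify lam hpos hmono β Γ hβ c heq, ?_⟩
  intro N₀ hN₀
  have hsq : ∀ k, k ≤ N₀ → lam k * Real.sqrt ((Γ - β * lam k) / lam k) ^ 2 = Γ - β * lam k := by
    intro k hk
    have hlt : β * lam k < Γ := (hN₀ k).2 hk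
    rw [Real.sq_sqrt (div_nonneg (by linarith) (hpos k).le)]
    exact mul_div_cancel₀ _ (ne_of_gt (hpos k))
  have hset : {c' : ℕ → ℝ | (Summable fun k => lam k ^ 2 * c' k ^ 2) ∧
          ∀ k, β * lam k ^ 2 * c' k + ((∑' j, lam j * c' j ^ 2) - Γ) * (lam k * c' k) = 0}
        = insert (0 : ℕ → ℝ)
            {c' : ℕ → ℝ | ∃ k ≤ N₀,
              c' = Pi.single k (Real.sqrt ((Γ - β * lam k) / lam k)) ∨
              c' = Pi.single k (-Real.sqrt ((Γ - β * lam k) / lam k))} := by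
    ext c'
    simp only [Set.mem_setOf_eq, Set.mem_insert_iff]
    constructor
    · rintro ⟨hs, he⟩
      rcases berger_classify lam hpos hmono β Γ hβ c' he with h | ⟨k, hk, hsupp, hlt, hval⟩
      · exact Or.inl (funext h)
      · refine Or.inr ⟨k, (hN₀ k).1 hlt, ?_⟩
        rcases hval with h | h
        · refine Or.inl (funext fun j => ?_)
          by_cases hj : j = k
          · subst hj; rw [Pi.single_eq_same]; exact h
          · rw [Pi.single_eq_of_ne hj]; exact hsupp j hj
        · refine Or.inr (funext fun j => ?_)
          by_cases hj : j = k
          · subst hj; rw [Pi.single_eq_same]; exact h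
          · rw [Pi.single_eq_of_ne hj]; exact hsupp j hj
    · rintro (rfl | ⟨k, hk, rfl | rfl⟩)
      · constructor
        · simpa using summable_zero
        · intro k; simp
      · exact single_mem lam β Γ k _ (hsq k hk)
      · exact single_mem lam β Γ k _ (by rw [neg_pow]; simpa using hsq k hk)
  refine ⟨hset, ?_⟩
  rw [hset]
  apply Set.Finite.insert
  have hsub : {c' : ℕ → ℝ | ∃ k ≤ N₀,
      c' = Pi.single k (Real.sqrt ((Γ - β * lam k) / lam k)) ∨
      c' = Pi.single k (-Real.sqrt ((Γ - β * lam k) / lam k))} ⊆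
      ⋃ k ∈ Set.Iic N₀,
        ({Pi.single k (Real.sqrt ((Γ - β * lam k) / lam k)),
          Pi.single k (-Real.sqrt ((Γ - β * lam k) / lam k))} : Set (ℕ → ℝ)) := by
    rintro c' ⟨k, hk, h⟩
    exact Set.mem_biUnion hk (by rcases h with h | h <;> simp [h])
  exact (Set.Finite.biUnion (Set.finite_Iic N₀)
    (fun k _ => (Set.finite_singleton _).insert _)).subset hsub
end

section
/- Let H be a real inner product space, let A : H → H be a continuous linear operator that is symmetric (⟨Au, v⟩ = ⟨u, Av⟩) and satisfies ⟨Au, u⟩ ≥ λ₁ ‖u‖² for all u ∈ H with some λ₁ > 0, let M : ℝ → ℝ be continuously differentiable, let p ∈ H, and define B(u) = M(⟨Au,u⟩) A u − p. Then for every R > 0 there exists C_R > 0 such that for all u¹, u² ∈ H with ‖Au¹‖ ≤ R and ‖Au²‖ ≤ R, setting z = u¹ − u², the quantity Q₀ = ∫₀¹ ⟨B(u² + λ z) − B(u²), z⟩ dλ satisfies |Q₀| ≤ C_R ‖Az‖ ‖z‖. -/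
open Set

private lemma coer_norm_bound {H : Type*} [NormedAddCommGroup H] [InnerProductSpace ℝ H]
    (A : H →L[ℝ] H) (lam₁ : ℝ) (hlam₁ : 0 < lam₁)
    (hcoer : ∀ u : H, lam₁ * ‖u‖ ^ 2 ≤ (inner ℝ (A u) u : ℝ)) (u : H) :
    ‖u‖ ≤ ‖A u‖ / lam₁ := by
  rcases eq_or_ne ‖u‖ 0 with h | h
  · rw [h]; positivity
  · have hu : 0 < ‖u‖ := lt_of_le_of_ne (norm_nonneg u) (Ne.symm h)
    have h1 : (inner ℝ (A u) u : ℝ) ≤ ‖A u‖ * ‖u‖ := real_inner_le_norm _ _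
    have h2 := hcoer u
    rw [le_div_iff₀ hlam₁]
    nlinarith

/-- Bound `|Q₀| ≤ C_R ‖Az‖ ‖z‖` for the compensator
`Q₀ = ∫₀¹ ⟨B(u² + λz) − B(u²), z⟩ dλ`, `z = u¹ − u²`, where
`B(u) = M(⟨Au,u⟩) Au − p` is the Berger nonlinearity, `A` symmetric and coercive. -/
theorem stmt_13
    (H : Type*) [NormedAddCommGroup H] [InnerProductSpace ℝ H]
    (A : H →L[ℝ] H) (hsym : ∀ u v : H, (inner ℝ (A u) v : ℝ) = inner ℝ u (A v))
    (lam₁ : ℝ) (hlam₁ : 0 < lam₁)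
    (hcoer : ∀ u : H, lam₁ * ‖u‖ ^ 2 ≤ (inner ℝ (A u) u : ℝ))
    (M : ℝ → ℝ) (hM : ContDiff ℝ 1 M) (p : H)
    (B : H → H) (hB : ∀ u : H, B u = M (inner ℝ (A u) u : ℝ) • A u - p) :
    ∀ R > (0:ℝ), ∃ C > (0:ℝ), ∀ u₁ u₂ : H,
      ‖A u₁‖ ≤ R → ‖A u₂‖ ≤ R →
      |∫ l in (0:ℝ)..1, (inner ℝ (B (u₂ + l • (u₁ - u₂)) - B u₂) (u₁ - u₂) : ℝ)|
        ≤ C * ‖A (u₁ - u₂)‖ * ‖u₁ - u₂‖ := by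
  intro R hR
  set K : ℝ := R * (R / lam₁) with hK
  have hK0 : 0 ≤ K := by positivity
  -- bound for M on [-K, K]
  obtain ⟨M₀, hM₀⟩ := (isCompact_Icc : IsCompact (Icc (-K) K)).exists_bound_of_continuousOn
    hM.continuous.continuousOn
  -- bound for deriv M on [-K, K]
  obtain ⟨L, hL⟩ := (isCompact_Icc : IsCompact (Icc (-K) K)).exists_bound_of_continuousOn
    (hM.continuous_deriv le_rfl).continuousOn
  set M₀' : ℝ := max M₀ 0 with hM₀'
  set L' : ℝ := max L 0 with hL'
  have hM₀'0 : 0 ≤ M₀' := le_max_right _ _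
  have hL'0 : 0 ≤ L' := le_max_right _ _
  set C₀ : ℝ := M₀' + L' * (4 * R / lam₁) * R with hC₀
  have hC₀0 : 0 ≤ C₀ := by positivity
  refine ⟨C₀ + 1, by positivity, ?_⟩
  intro u₁ u₂ h₁ h₂
  set z : H := u₁ - u₂ with hz
  set a : ℝ := ‖A z‖ with ha
  set n : ℝ := ‖z‖ with hn
  have ha0 : 0 ≤ a := norm_nonneg _
  have hn0 : 0 ≤ n := norm_nonneg _
  -- the Lipschitz estimate for M on [-K,K]
  have hLip : ∀ x ∈ Icc (-K) K, ∀ y ∈ Icc (-K) K, |M y - M x| ≤ L' * |y - x| := by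
    intro x hx y hy
    have := Convex.norm_image_sub_le_of_norm_deriv_le
      (f := M) (s := Icc (-K) K) (C := L')
      (fun t _ => (hM.differentiable one_ne_zero).differentiableAt)
      (fun t ht => le_trans (hL t ht) (le_max_left _ _)) (convex_Icc _ _) hx hy
    simpa [Real.norm_eq_abs] using this
  -- norm bounds from coercivity
  have hnu₂ : ‖u₂‖ ≤ R / lam₁ := by
    calc ‖u₂‖ ≤ ‖A u₂‖ / lam₁ := coer_norm_bound A lam₁ hlam₁ hcoer u₂
    _ ≤ R / lam₁ := by gcongr
  -- key pointwise estimate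
  have key : ∀ l ∈ Set.uIoc (0:ℝ) 1,
      ‖(inner ℝ (B (u₂ + l • z) - B u₂) z : ℝ)‖ ≤ C₀ * (a * n) := by
    intro l hl
    rw [Set.uIoc_of_le (by norm_num : (0:ℝ) ≤ 1)] at hl
    obtain ⟨hl0, hl1⟩ := hl
    set v : H := u₂ + l • z with hv
    have hAv : A v = A u₂ + l • A z := by simp [hv]
    have hAvR : ‖A v‖ ≤ R := by
      have hveq : v = (1 - l) • u₂ + l • u₁ := by
        rw [hv, hz]; module
      have : A v = (1 - l) • A u₂ + l • A u₁ := by rw [hveq]; simp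
      rw [this]
      calc ‖(1 - l) • A u₂ + l • A u₁‖ ≤ ‖(1 - l) • A u₂‖ + ‖l • A u₁‖ := norm_add_le _ _
      _ = (1 - l) * ‖A u₂‖ + l * ‖A u₁‖ := by
          rw [norm_smul, norm_smul, Real.norm_eq_abs, Real.norm_eq_abs,
            abs_of_nonneg (by linarith), abs_of_nonneg (le_of_lt hl0)]
      _ ≤ (1 - l) * R + l * R := by
          have h1l : 0 ≤ 1 - l := by linarith
          gcongr
      _ = R := by ring
    have hnv : ‖v‖ ≤ R / lam₁ := by
      calc ‖v‖ ≤ ‖A v‖ / lam₁ := coer_norm_bound A lam₁ hlam₁ hcoer v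
      _ ≤ R / lam₁ := by gcongr
    have hnz : n ≤ 2 * (R / lam₁) := by
      have h1 : ‖u₁‖ ≤ R / lam₁ := by
        calc ‖u₁‖ ≤ ‖A u₁‖ / lam₁ := coer_norm_bound A lam₁ hlam₁ hcoer u₁
        _ ≤ R / lam₁ := by gcongr
      calc n = ‖u₁ - u₂‖ := rfl
      _ ≤ ‖u₁‖ + ‖u₂‖ := norm_sub_le _ _
      _ ≤ 2 * (R / lam₁) := by linarith
    set s₁ : ℝ := (inner ℝ (A v) v : ℝ) with hs₁
    set s₂ : ℝ := (inner ℝ (A u₂) u₂ : ℝ) with hs₂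
    have hmem : ∀ (w : H), ‖A w‖ ≤ R → ‖w‖ ≤ R / lam₁ →
        (inner ℝ (A w) w : ℝ) ∈ Icc (-K) K := by
      intro w hw1 hw2
      have habs : |(inner ℝ (A w) w : ℝ)| ≤ K := by
        calc |(inner ℝ (A w) w : ℝ)| ≤ ‖A w‖ * ‖w‖ := abs_real_inner_le_norm _ _
        _ ≤ R * (R / lam₁) := by
            apply mul_le_mul hw1 hw2 (norm_nonneg _) (le_of_lt hR)
      exact abs_le.mp habs |>.imp (fun h => h) (fun h => h) |> fun h => ⟨h.1, h.2⟩
    have hs₁mem : s₁ ∈ Icc (-K) K := hmem v hAvR hnv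
    have hs₂mem : s₂ ∈ Icc (-K) K := hmem u₂ h₂ hnu₂
    -- |M s₁| ≤ M₀'
    have hMs₁ : |M s₁| ≤ M₀' :=
      le_trans (by simpa [Real.norm_eq_abs] using hM₀ s₁ hs₁mem) (le_max_left _ _)
    -- difference of the arguments
    have hsdiff : s₁ - s₂ = 2 * l * (inner ℝ (A z) u₂ : ℝ) + l ^ 2 * (inner ℝ (A z) z : ℝ) := by
      have e1 : (inner ℝ (A u₂) z : ℝ) = (inner ℝ (A z) u₂ : ℝ) := by
        rw [hsym u₂ z, real_inner_comm]
      rw [hs₁, hs₂, hAv, hv]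
      simp only [inner_add_left, inner_add_right, real_inner_smul_left, real_inner_smul_right, e1]
      ring
    have hsdiff_bound : |s₁ - s₂| ≤ 4 * R / lam₁ * a := by
      rw [hsdiff]
      have b1 : |(inner ℝ (A z) u₂ : ℝ)| ≤ a * (R / lam₁) := by
        calc |(inner ℝ (A z) u₂ : ℝ)| ≤ ‖A z‖ * ‖u₂‖ := abs_real_inner_le_norm _ _
        _ ≤ a * (R / lam₁) := by rw [← ha]; gcongr
      have b2 : |(inner ℝ (A z) z : ℝ)| ≤ a * (2 * (R / lam₁)) := by
        calc |(inner ℝ (A z) z : ℝ)| ≤ ‖A z‖ * ‖z‖ := abs_real_inner_le_norm _ _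
        _ ≤ a * (2 * (R / lam₁)) := by rw [← ha, ← hn]; gcongr
      have hl2 : l ^ 2 ≤ 1 := by nlinarith
      have hl2' : 0 ≤ l ^ 2 := sq_nonneg l
      calc |2 * l * (inner ℝ (A z) u₂ : ℝ) + l ^ 2 * (inner ℝ (A z) z : ℝ)|
          ≤ |2 * l * (inner ℝ (A z) u₂ : ℝ)| + |l ^ 2 * (inner ℝ (A z) z : ℝ)| := abs_add_le _ _
      _ = 2 * l * |(inner ℝ (A z) u₂ : ℝ)| + l ^ 2 * |(inner ℝ (A z) z : ℝ)| := by
          rw [abs_mul, abs_mul, abs_mul, abs_of_pos hl0, abs_of_nonneg hl2', abs_two]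
      _ ≤ 2 * 1 * (a * (R / lam₁)) + 1 * (a * (2 * (R / lam₁))) := by
          have hia : 0 ≤ |(inner ℝ (A z) u₂ : ℝ)| := abs_nonneg _
          have hib : 0 ≤ |(inner ℝ (A z) z : ℝ)| := abs_nonneg _
          have t1 : 2 * l * |(inner ℝ (A z) u₂ : ℝ)| ≤ 2 * 1 * (a * (R / lam₁)) := by
            apply mul_le_mul (by linarith) b1 hia (by norm_num)
          have t2 : l ^ 2 * |(inner ℝ (A z) z : ℝ)| ≤ 1 * (a * (2 * (R / lam₁))) := by
            apply mul_le_mul hl2 b2 hib (by norm_num)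
          linarith
      _ = 4 * R / lam₁ * a := by field_simp; ring
    have hMdiff : |M s₁ - M s₂| ≤ L' * (4 * R / lam₁ * a) := by
      calc |M s₁ - M s₂| ≤ L' * |s₁ - s₂| := hLip s₂ hs₂mem s₁ hs₁mem
      _ ≤ L' * (4 * R / lam₁ * a) := by gcongr
    -- decompose B v - B u₂
    have hBz : B v - B u₂ = (M s₁ * l) • A z + (M s₁ - M s₂) • A u₂ := by
      rw [hB v, hB u₂, ← hs₁, ← hs₂, hAv]; module
    have hinner : (inner ℝ (B v - B u₂) z : ℝ)
        = M s₁ * l * (inner ℝ (A z) z : ℝ) + (M s₁ - M s₂) * (inner ℝ (A u₂) z : ℝ) := by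
      rw [hBz, inner_add_left, real_inner_smul_left, real_inner_smul_left]
    rw [Real.norm_eq_abs, hinner]
    have b2 : |(inner ℝ (A z) z : ℝ)| ≤ a * n := by
      calc |(inner ℝ (A z) z : ℝ)| ≤ ‖A z‖ * ‖z‖ := abs_real_inner_le_norm _ _
      _ = a * n := rfl
    have b3 : |(inner ℝ (A u₂) z : ℝ)| ≤ R * n := by
      calc |(inner ℝ (A u₂) z : ℝ)| ≤ ‖A u₂‖ * ‖z‖ := abs_real_inner_le_norm _ _
      _ ≤ R * n := by rw [← hn]; gcongr
    calc |M s₁ * l * (inner ℝ (A z) z : ℝ) + (M s₁ - M s₂) * (inner ℝ (A u₂) z : ℝ)|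
        ≤ |M s₁ * l * (inner ℝ (A z) z : ℝ)| + |(M s₁ - M s₂) * (inner ℝ (A u₂) z : ℝ)| :=
          abs_add_le _ _
    _ = |M s₁| * |l| * |(inner ℝ (A z) z : ℝ)| + |M s₁ - M s₂| * |(inner ℝ (A u₂) z : ℝ)| := by
        rw [abs_mul, abs_mul, abs_mul]
    _ ≤ M₀' * 1 * (a * n) + (L' * (4 * R / lam₁ * a)) * (R * n) := by
        have hil : |l| ≤ 1 := by rw [abs_of_pos hl0]; exact hl1
        have t1 : |M s₁| * |l| * |(inner ℝ (A z) z : ℝ)| ≤ M₀' * 1 * (a * n) := by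
          apply mul_le_mul (mul_le_mul hMs₁ hil (abs_nonneg _) hM₀'0) b2 (abs_nonneg _)
          positivity
        have t2 : |M s₁ - M s₂| * |(inner ℝ (A u₂) z : ℝ)|
            ≤ (L' * (4 * R / lam₁ * a)) * (R * n) := by
          apply mul_le_mul hMdiff b3 (abs_nonneg _)
          positivity
        linarith
    _ = C₀ * (a * n) := by rw [hC₀]; ring
  have := intervalIntegral.norm_integral_le_of_norm_le_const
    (f := fun l => (inner ℝ (B (u₂ + l • z) - B u₂) z : ℝ)) (C := C₀ * (a * n)) key
  rw [Real.norm_eq_abs] at this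
  calc |∫ l in (0:ℝ)..1, (inner ℝ (B (u₂ + l • z) - B u₂) z : ℝ)|
      ≤ C₀ * (a * n) * |1 - 0| := this
  _ = C₀ * (a * n) := by norm_num
  _ ≤ (C₀ + 1) * a * n := by nlinarith
end

section
/- Let X be a Banach space and M a bounded closed subset of X. Assume there exists a mapping V : M → X with M ⊆ V(M) such that: (i) V is Lipschitz on M with constant L > 0, i.e. ‖Vv₁ − Vv₂‖ ≤ L ‖v₁ − v₂‖ for all v₁, v₂ ∈ M; and (ii) there exist compact seminorms n₁ and n₂ on X, a constant η ∈ (0,1), and a constant K > 0 such that ‖Vv₁ − Vv₂‖ ≤ η ‖v₁ − v₂‖ + K [n₁(v₁ − v₂) + n₂(Vv₁ − Vv₂)] for all v₁, v₂ ∈ M. Then M is a compact subset of X of finite fractal dimension; in particular there exist constants C > 0 and ε₀ > 0 such that for every ε ∈ (0, ε₀) the set M can be covered by at most (1/ε)^C closed balls of radius ε. -/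
/-- A seminorm `n` on `X` is compact if every bounded sequence has a subsequence that is
Cauchy with respect to `n`. -/
def CompactSeminorm {X : Type*} [NormedAddCommGroup X] [NormedSpace ℝ X]
    (n : Seminorm ℝ X) : Prop :=
  ∀ f : ℕ → X, Bornology.IsBounded (Set.range f) →
    ∃ φ : ℕ → ℕ, StrictMono φ ∧
      ∀ ε > (0:ℝ), ∃ N : ℕ, ∀ i ≥ N, ∀ j ≥ N, n (f (φ i) - f (φ j)) < ε

lemma exists_net {X : Type*} [NormedAddCommGroup X] [NormedSpace ℝ X]
    (n : Seminorm ℝ X) (hn : CompactSeminorm n) (B : Set X)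
    (hB : Bornology.IsBounded B) (δ : ℝ) (hδ : 0 < δ) :
    ∃ T : Finset X, ∀ x ∈ B, ∃ t ∈ T, n (x - t) < δ := by
  by_contra h
  push_neg at h
  choose F hFB hF using h
  classical
  let T : ℕ → Finset X := fun k => Nat.rec ∅ (fun _ S => insert (F S) S) k
  let g : ℕ → X := fun k => F (T k)
  have hgB : ∀ k, g k ∈ B := fun k => hFB (T k)
  have hTsucc : ∀ k, T (k+1) = insert (g k) (T k) := fun k => rfl
  have hmono : ∀ j k, j ≤ k → T j ⊆ T k := by
    intro j k hjk
    induction k with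
    | zero => simp_all
    | succ k ih =>
      rcases Nat.lt_or_ge j (k+1) with h' | h'
      · have := ih (Nat.lt_succ_iff.mp h')
        rw [hTsucc]
        exact this.trans (Finset.subset_insert _ _)
      · have : j = k+1 := le_antisymm hjk h'
        simp [this]
  have hmem : ∀ j k, j < k → g j ∈ T k := by
    intro j k hjk
    have : g j ∈ T (j+1) := by rw [hTsucc]; exact Finset.mem_insert_self _ _
    exact hmono (j+1) k hjk this
  have hsep : ∀ j k, j < k → δ ≤ n (g k - g j) := by
    intro j k hjk
    exact hF (T k) (g j) (hmem j k hjk)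
  obtain ⟨φ, hφ, hc⟩ := hn g (hB.subset (Set.range_subset_iff.mpr hgB))
  obtain ⟨N, hN⟩ := hc δ hδ
  have h1 : n (g (φ (N+1)) - g (φ N)) < δ := hN (N+1) (Nat.le_succ N) N le_rfl
  have h2 : δ ≤ n (g (φ (N+1)) - g (φ N)) := hsep (φ N) (φ (N+1)) (hφ (Nat.lt_succ_self N))
  linarith

/-- Generalized Ladyzhenskaya theorem: if a bounded closed set `M ⊆ V(M)` admits a
Lipschitz map `V` satisfying the squeezing estimate
`‖Vv₁ − Vv₂‖ ≤ η‖v₁ − v₂‖ + K[n₁(v₁ − v₂) + n₂(Vv₁ − Vv₂)]` with `η ∈ (0,1)` and compact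
seminorms `n₁, n₂`, then `M` is compact of finite fractal dimension: for some `C, ε₀ > 0`
and all `ε ∈ (0, ε₀)`, `M` is covered by at most `(1/ε)^C` closed balls of radius `ε`. -/
theorem stmt_16
    (X : Type*) [NormedAddCommGroup X] [NormedSpace ℝ X] [CompleteSpace X]
    (M : Set X) (hMb : Bornology.IsBounded M) (hMc : IsClosed M)
    (V : X → X) (hMV : M ⊆ V '' M)
    (L : ℝ) (hL : 0 < L)
    (hLip : ∀ v₁ ∈ M, ∀ v₂ ∈ M, ‖V v₁ - V v₂‖ ≤ L * ‖v₁ - v₂‖)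
    (n₁ n₂ : Seminorm ℝ X) (hn₁ : CompactSeminorm n₁) (hn₂ : CompactSeminorm n₂)
    (η K : ℝ) (hη : η ∈ Set.Ioo (0:ℝ) 1) (hK : 0 < K)
    (hest : ∀ v₁ ∈ M, ∀ v₂ ∈ M,
      ‖V v₁ - V v₂‖ ≤ η * ‖v₁ - v₂‖ + K * (n₁ (v₁ - v₂) + n₂ (V v₁ - V v₂))) :
    IsCompact M ∧
    ∃ C > (0:ℝ), ∃ ε₀ > (0:ℝ), ∀ ε ∈ Set.Ioo (0:ℝ) ε₀,
      ∃ S : Finset X, (S.card : ℝ) ≤ (1 / ε) ^ C ∧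
        M ⊆ ⋃ x ∈ S, Metric.closedBall x ε := by
  classical
  obtain ⟨hη0, hη1⟩ := hη
  set q : ℝ := (1+η)/2 with hqdef
  have hq0 : 0 < q := by simp only [hqdef]; linarith
  have hq1 : q < 1 := by simp only [hqdef]; linarith
  set θ₁ : ℝ := (1-η)/(8*K) with hθ₁def
  set θ₂ : ℝ := (1-η)/(8*K*L) with hθ₂def
  have hθ₁ : 0 < θ₁ := by
    rw [hθ₁def]; exact div_pos (by linarith) (by positivity)
  have hθ₂ : 0 < θ₂ := by
    rw [hθ₂def]; exact div_pos (by linarith) (by positivity)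
  obtain ⟨T₁, hT₁⟩ := exists_net n₁ hn₁ (Metric.closedBall 0 1)
    Metric.isBounded_closedBall θ₁ hθ₁
  obtain ⟨T₂, hT₂⟩ := exists_net n₂ hn₂ (Metric.closedBall 0 1)
    Metric.isBounded_closedBall θ₂ hθ₂
  set n₀ : ℕ := T₁.card * T₂.card with hn₀def
  obtain ⟨D, hD⟩ := Metric.isBounded_iff.mp hMb
  set d₀ : ℝ := max D 1 with hd₀def
  have hd₀ : 1 ≤ d₀ := le_max_right _ _
  have hd₀0 : 0 < d₀ := lt_of_lt_of_le one_pos hd₀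
  set x₀ : Set X → X := fun P => if h : P.Nonempty then h.choose else 0 with hx₀def
  have hx₀mem : ∀ P : Set X, ∀ h : P.Nonempty, x₀ P ∈ P := by
    intro P hP
    simp only [hx₀def, dif_pos hP]
    exact hP.choose_spec
  -- the key iterated covering
  have key : ∀ k : ℕ, ∃ F : Finset (Set X),
      F.card ≤ n₀ ^ k ∧ (∀ P ∈ F, P ⊆ M) ∧
      (∀ P ∈ F, ∀ x ∈ P, ∀ y ∈ P, dist x y ≤ q ^ k * d₀) ∧
      M ⊆ ⋃₀ ↑F := by
    intro k
    induction k with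
    | zero =>
      refine ⟨{M}, by simp, by simp, ?_, by simp⟩
      intro P hP x hx y hy
      simp only [Finset.mem_singleton] at hP
      subst hP
      calc dist x y ≤ D := hD hx hy
        _ ≤ d₀ := le_max_left D 1
        _ = q ^ 0 * d₀ := by rw [pow_zero, one_mul]
    | succ k ih =>
      obtain ⟨F, hcard, hsub, hdiam, hcov⟩ := ih
      set d : ℝ := q ^ k * d₀ with hddef
      have hdpos : 0 < d := by rw [hddef]; positivity
      set g : Set X × X × X → Set X := fun p =>
        (V '' {x ∈ p.1 | n₁ (x - x₀ p.1 - d • p.2.1) < θ₁ * d ∧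
          n₂ (V x - V (x₀ p.1) - (L*d) • p.2.2) < θ₂ * (L*d)}) ∩ M with hgdef
      refine ⟨Finset.image g (F ×ˢ T₁ ×ˢ T₂), ?_, ?_, ?_, ?_⟩
      · calc (Finset.image g (F ×ˢ T₁ ×ˢ T₂)).card ≤ (F ×ˢ T₁ ×ˢ T₂).card :=
              Finset.card_image_le
          _ = F.card * (T₁.card * T₂.card) := by
              simp [Finset.card_product]
          _ ≤ n₀ ^ k * n₀ := Nat.mul_le_mul_right _ hcard
          _ = n₀ ^ (k+1) := (pow_succ n₀ k).symm
      · intro P hP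
        simp only [Finset.mem_image] at hP
        obtain ⟨p, -, rfl⟩ := hP
        exact Set.inter_subset_right
      · intro P hP x hx y hy
        simp only [Finset.mem_image] at hP
        obtain ⟨p, hpmem, rfl⟩ := hP
        simp only [Finset.mem_product] at hpmem
        obtain ⟨hp1, -, -⟩ := hpmem
        simp only [hgdef, Set.mem_inter_iff, Set.mem_image, Set.mem_setOf_eq] at hx hy
        obtain ⟨⟨u, ⟨huP, hu1, hu2⟩, rfl⟩, -⟩ := hx
        obtain ⟨⟨v, ⟨hvP, hv1, hv2⟩, rfl⟩, -⟩ := hy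
        have huM : u ∈ M := hsub p.1 hp1 huP
        have hvM : v ∈ M := hsub p.1 hp1 hvP
        have e1 : ‖u - v‖ ≤ d := by
          rw [← dist_eq_norm]
          exact hdiam p.1 hp1 u huP v hvP
        have e2 : n₁ (u - v) ≤ 2 * (θ₁ * d) := by
          have huv : u - v = (u - x₀ p.1 - d • p.2.1) - (v - x₀ p.1 - d • p.2.1) := by abel
          rw [huv]
          calc n₁ _ ≤ n₁ (u - x₀ p.1 - d • p.2.1) + n₁ (v - x₀ p.1 - d • p.2.1) :=
                map_sub_le_add n₁ _ _
            _ ≤ 2 * (θ₁ * d) := by linarith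
        have e3 : n₂ (V u - V v) ≤ 2 * (θ₂ * (L*d)) := by
          have huv : V u - V v = (V u - V (x₀ p.1) - (L*d) • p.2.2)
              - (V v - V (x₀ p.1) - (L*d) • p.2.2) := by abel
          rw [huv]
          calc n₂ _ ≤ n₂ (V u - V (x₀ p.1) - (L*d) • p.2.2)
                + n₂ (V v - V (x₀ p.1) - (L*d) • p.2.2) := map_sub_le_add n₂ _ _
            _ ≤ 2 * (θ₂ * (L*d)) := by linarith
        have e4 := hest u huM v hvM
        have key2 : ‖V u - V v‖ ≤ q * d := by
          have harith : η * d + K * (2 * (θ₁ * d) + 2 * (θ₂ * (L*d))) = q * d := by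
            rw [hθ₁def, hθ₂def, hqdef]
            field_simp
            ring
          calc ‖V u - V v‖ ≤ η * ‖u - v‖ + K * (n₁ (u - v) + n₂ (V u - V v)) := e4
            _ ≤ η * d + K * (2 * (θ₁ * d) + 2 * (θ₂ * (L*d))) := by
                have := mul_le_mul_of_nonneg_left e1 hη0.le
                have := mul_le_mul_of_nonneg_left (add_le_add e2 e3) hK.le
                linarith
            _ = q * d := harith
        rw [dist_eq_norm]
        calc ‖V u - V v‖ ≤ q * d := key2
          _ = q ^ (k+1) * d₀ := by rw [hddef, pow_succ]; ring
      · intro m hm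
        obtain ⟨w, hwM, hwV⟩ := hMV hm
        obtain ⟨P, hPF, hwP⟩ := hcov hwM
        have hPne : P.Nonempty := ⟨w, hwP⟩
        have hx₀P : x₀ P ∈ P := hx₀mem P hPne
        have hx₀M : x₀ P ∈ M := hsub P hPF hx₀P
        have hdist : ‖w - x₀ P‖ ≤ d := by
          rw [← dist_eq_norm]
          exact hdiam P hPF w hwP (x₀ P) hx₀P
        -- first net point
        have hz₁ : d⁻¹ • (w - x₀ P) ∈ Metric.closedBall (0:X) 1 := by
          rw [Metric.mem_closedBall, dist_zero_right, norm_smul, Real.norm_eq_abs,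
            abs_inv, abs_of_pos hdpos]
          rw [inv_mul_le_iff₀ hdpos]
          simpa using hdist
        obtain ⟨a, haT, ha⟩ := hT₁ _ hz₁
        have ha' : n₁ (w - x₀ P - d • a) < θ₁ * d := by
          have hrw : w - x₀ P - d • a = d • (d⁻¹ • (w - x₀ P) - a) := by
            rw [smul_sub, smul_smul, mul_inv_cancel₀ hdpos.ne', one_smul]
          rw [hrw, map_smul_eq_mul, Real.norm_eq_abs, abs_of_pos hdpos, mul_comm θ₁ d]
          exact mul_lt_mul_of_pos_left ha hdpos
        -- second net point
        have hVdist : ‖V w - V (x₀ P)‖ ≤ L * d := by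
          calc ‖V w - V (x₀ P)‖ ≤ L * ‖w - x₀ P‖ := hLip w hwM (x₀ P) hx₀M
            _ ≤ L * d := mul_le_mul_of_nonneg_left hdist hL.le
        have hLd : 0 < L * d := mul_pos hL hdpos
        have hz₂ : (L*d)⁻¹ • (V w - V (x₀ P)) ∈ Metric.closedBall (0:X) 1 := by
          rw [Metric.mem_closedBall, dist_zero_right, norm_smul, Real.norm_eq_abs,
            abs_inv, abs_of_pos hLd]
          rw [inv_mul_le_iff₀ hLd]
          simpa using hVdist
        obtain ⟨b, hbT, hb⟩ := hT₂ _ hz₂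
        have hb' : n₂ (V w - V (x₀ P) - (L*d) • b) < θ₂ * (L*d) := by
          have hrw : V w - V (x₀ P) - (L*d) • b
              = (L*d) • ((L*d)⁻¹ • (V w - V (x₀ P)) - b) := by
            rw [smul_sub, smul_smul, mul_inv_cancel₀ hLd.ne', one_smul]
          rw [hrw, map_smul_eq_mul, Real.norm_eq_abs, abs_of_pos hLd, mul_comm θ₂ (L*d)]
          exact mul_lt_mul_of_pos_left hb hLd
        refine Set.mem_sUnion.mpr ⟨g (P, a, b), ?_, ?_⟩
        · simp only [Finset.coe_image, Set.mem_image, Finset.mem_coe]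
          exact ⟨(P, a, b), Finset.mem_product.mpr ⟨hPF,
            Finset.mem_product.mpr ⟨haT, hbT⟩⟩, rfl⟩
        · exact ⟨⟨w, ⟨hwP, ha', hb'⟩, hwV⟩, hm⟩
  -- convergence of scales
  have htend : Filter.Tendsto (fun k : ℕ => q ^ k * d₀) Filter.atTop (nhds 0) := by
    have := (tendsto_pow_atTop_nhds_zero_of_lt_one hq0.le hq1).mul_const d₀
    simpa using this
  -- compactness
  have htb : TotallyBounded M := by
    rw [Metric.totallyBounded_iff]
    intro ε hε
    obtain ⟨k, hk⟩ := (htend.eventually (gt_mem_nhds hε)).exists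
    obtain ⟨F, -, hsub, hdiam, hcov⟩ := key k
    refine ⟨x₀ '' ↑F, (F.finite_toSet.image _), ?_⟩
    intro m hm
    obtain ⟨P, hPF, hmP⟩ := hcov hm
    have hPne : P.Nonempty := ⟨m, hmP⟩
    refine Set.mem_biUnion ⟨P, hPF, rfl⟩ ?_
    rw [Metric.mem_ball]
    exact lt_of_le_of_lt (hdiam P hPF m hmP (x₀ P) (hx₀mem P hPne)) hk
  have hcomp : IsCompact M := isCompact_iff_totallyBounded_isComplete.mpr ⟨htb, hMc.isComplete⟩
  refine ⟨hcomp, ?_⟩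
  -- fractal dimension constants
  set m₀ : ℕ := max n₀ 2 with hm₀def
  have hm₀2 : (2:ℕ) ≤ m₀ := le_max_right _ _
  have hm₀R : (1:ℝ) < (m₀:ℝ) := by exact_mod_cast lt_of_lt_of_le one_lt_two hm₀2
  have hlogm : 0 < Real.log m₀ := Real.log_pos hm₀R
  set β : ℝ := -Real.log q with hβdef
  have hβpos : 0 < β := by
    rw [hβdef, neg_pos]
    exact Real.log_neg hq0 hq1
  set α : ℝ := Real.log m₀ / β with hαdef
  have hαpos : 0 < α := div_pos hlogm hβpos
  have hαβ : α * β = Real.log m₀ := div_mul_cancel₀ _ hβpos.ne'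
  have hlogd₀ : 0 ≤ Real.log d₀ := Real.log_nonneg hd₀
  set B' : ℝ := Real.log m₀ + α * Real.log d₀ with hB'def
  have hB'pos : 0 < B' := by
    have : 0 ≤ α * Real.log d₀ := mul_nonneg hαpos.le hlogd₀
    rw [hB'def]; linarith
  clear_value m₀ β α B'
  refine ⟨α + 1, by linarith, Real.exp (-B'), Real.exp_pos _, ?_⟩
  rintro ε ⟨hε0, hεlt⟩
  have hLεB : B' < Real.log (1/ε) := by
    have h1 : Real.log ε < -B' := by
      calc Real.log ε < Real.log (Real.exp (-B')) := Real.log_lt_log hε0 hεlt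
        _ = -B' := Real.log_exp _
    rw [one_div, Real.log_inv]
    linarith
  have hLεpos : 0 < Real.log (1/ε) := lt_trans hB'pos hLεB
  have hex : ∃ k, q ^ k * d₀ ≤ ε := by
    obtain ⟨k, hk⟩ := (htend.eventually (gt_mem_nhds hε0)).exists
    exact ⟨k, hk.le⟩
  obtain ⟨k, hkspec, hkmin⟩ : ∃ k : ℕ, (q ^ k * d₀ ≤ ε) ∧ ∀ j < k, ¬(q ^ j * d₀ ≤ ε) :=
    ⟨Nat.find hex, Nat.find_spec hex, fun j hj => Nat.find_min hex hj⟩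
  obtain ⟨F, hcard, hsub, hdiam, hcov⟩ := key k
  refine ⟨Finset.image x₀ F, ?_, ?_⟩
  · -- cardinality bound
    have hcard2 : (Finset.image x₀ F).card ≤ m₀ ^ k := by
      calc (Finset.image x₀ F).card ≤ F.card := Finset.card_image_le
        _ ≤ n₀ ^ k := hcard
        _ ≤ m₀ ^ k := by rw [hm₀def]; exact Nat.pow_le_pow_left (le_max_left _ _) k
    have hklog : (k:ℝ) * Real.log m₀ ≤ (α + 1) * Real.log (1/ε) := by
      rcases Nat.eq_zero_or_pos k with hk0 | hkpos
      · rw [hk0]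
        simp only [Nat.cast_zero, zero_mul]
        positivity
      · obtain ⟨j, hkj⟩ := Nat.exists_eq_succ_of_ne_zero hkpos.ne'
        have hjlt : ε < q ^ j * d₀ := by
          have := hkmin j (by omega)
          push_neg at this
          exact this
        have hlog : Real.log ε < (j:ℝ) * Real.log q + Real.log d₀ := by
          calc Real.log ε < Real.log (q ^ j * d₀) := Real.log_lt_log hε0 hjlt
            _ = (j:ℝ) * Real.log q + Real.log d₀ := by
                rw [Real.log_mul (pow_ne_zero j hq0.ne') hd₀0.ne', Real.log_pow]
        have hjβ : (j:ℝ) * β ≤ Real.log d₀ + Real.log (1/ε) := by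
          rw [hβdef, one_div, Real.log_inv]
          nlinarith [hlog]
        have hmul : α * ((j:ℝ) * β) ≤ α * (Real.log d₀ + Real.log (1/ε)) :=
          mul_le_mul_of_nonneg_left hjβ hαpos.le
        have hrw : (j:ℝ) * Real.log m₀ = α * ((j:ℝ) * β) := by
          rw [← hαβ]; ring
        have hB'le : B' ≤ Real.log (1/ε) := hLεB.le
        rw [hB'def] at hB'le
        have e5 : α * (Real.log d₀ + Real.log (1/ε))
            = α * Real.log d₀ + α * Real.log (1/ε) := by ring
        have e6 : (α + 1) * Real.log (1/ε)
            = α * Real.log (1/ε) + Real.log (1/ε) := by ring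
        rw [hkj]
        push_cast
        linarith [hmul, hrw, hB'le, e5, e6]
    have hexp : ((m₀:ℝ)) ^ k ≤ (1/ε) ^ (α+1) := by
      have h1 : ((m₀:ℝ)) ^ k = Real.exp ((k:ℝ) * Real.log m₀) := by
        rw [← Real.rpow_natCast (m₀:ℝ) k,
          Real.rpow_def_of_pos (lt_trans one_pos hm₀R), mul_comm]
      have h2 : (1/ε) ^ (α+1) = Real.exp ((α+1) * Real.log (1/ε)) := by
        rw [Real.rpow_def_of_pos (one_div_pos.mpr hε0), mul_comm]
      rw [h1, h2]
      exact Real.exp_le_exp.mpr hklog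
    calc ((Finset.image x₀ F).card : ℝ) ≤ ((m₀:ℝ)) ^ k := by exact_mod_cast hcard2
      _ ≤ (1/ε) ^ (α+1) := hexp
  · -- covering
    intro m hm
    obtain ⟨P, hPF, hmP⟩ := hcov hm
    have hPne : P.Nonempty := ⟨m, hmP⟩
    refine Set.mem_biUnion (Finset.mem_image_of_mem x₀ hPF) ?_
    rw [Metric.mem_closedBall]
    exact (hdiam P hPF m hmP (x₀ P) (hx₀mem P hPne)).trans hkspec
end

section
/- Let X be a complete metric space with metric d and (X, S_t) a dynamical system. Assume that for every bounded positively invariant set B ⊆ X there exist T > 0, q ∈ (0,1), and a pseudometric ρ on the space C([0,T]; X) of continuous X-valued paths such that: (i) ρ is precompact with respect to X, meaning every sequence (x_n) ⊆ B has a subsequence (x_{n_k}) such that the paths y_k : τ ↦ S_τ x_{n_k} form a Cauchy sequence with respect to ρ; and (ii) for all y₁, y₂ ∈ B, d(S_T y₁, S_T y₂) ≤ q · d(y₁, y₂) + ρ({S_τ y₁}, {S_τ y₂}), where {S_τ y_i} denotes the path τ ↦ S_τ y_i in C([0,T]; X). Then (X, S_t) is asymptotically smooth. -/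
open Filter

/-- A dynamical system on a metric space: a semigroup of maps `S t`, `t ≥ 0`, with
`S 0 = id`, `S (t+s) = S t ∘ S s`, and joint continuity in `(t, x)` on `[0,∞) × X`. -/
def IsDynSys {X : Type*} [MetricSpace X] (S : ℝ → X → X) : Prop :=
  (∀ x : X, S 0 x = x) ∧
  (∀ t ≥ (0:ℝ), ∀ s ≥ (0:ℝ), ∀ x : X, S (t + s) x = S t (S s x)) ∧
  ContinuousOn (fun p : ℝ × X => S p.1 p.2) (Set.Ici 0 ×ˢ Set.univ)

/-- The set `K` uniformly attracts the set `D` under the dynamics `S`. -/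
def Attracts {X : Type*} [MetricSpace X] (S : ℝ → X → X) (D K : Set X) : Prop :=
  ∀ ε > (0:ℝ), ∃ T : ℝ, ∀ t ≥ T, ∀ U ∈ D, Metric.infDist (S t U) K < ε

/-- The dynamical system `S` is asymptotically smooth. -/
def AsymptoticallySmooth {X : Type*} [MetricSpace X] (S : ℝ → X → X) : Prop :=
  ∀ D : Set X, Bornology.IsBounded D → (∀ t ≥ (0:ℝ), S t '' D ⊆ D) →
    ∃ K : Set X, K ⊆ closure D ∧ IsCompact K ∧ Attracts S D K

/-- Criterion for asymptotic smoothness: if for every bounded positively invariant `B`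
there are `T > 0`, `q ∈ (0,1)` and a precompact pseudometric `ρ` on paths such that
`dist(S_T y₁, S_T y₂) ≤ q dist(y₁,y₂) + ρ({S_τ y₁},{S_τ y₂})` on `B`, then the system
is asymptotically smooth. -/
theorem stmt_18
    (X : Type*) [MetricSpace X] [CompleteSpace X]
    (S : ℝ → X → X) (hS : IsDynSys S)
    (hcrit : ∀ B : Set X, Bornology.IsBounded B → (∀ t ≥ (0:ℝ), S t '' B ⊆ B) →
      ∃ T > (0:ℝ), ∃ q ∈ Set.Ioo (0:ℝ) 1, ∃ ρ : (ℝ → X) → (ℝ → X) → ℝ,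
        (∀ y₁ y₂, 0 ≤ ρ y₁ y₂) ∧
        (∀ y₁ y₂, ρ y₁ y₂ = ρ y₂ y₁) ∧
        (∀ y, ρ y y = 0) ∧
        (∀ y₁ y₂ y₃, ρ y₁ y₃ ≤ ρ y₁ y₂ + ρ y₂ y₃) ∧
        (∀ x : ℕ → X, (∀ m, x m ∈ B) →
          ∃ φ : ℕ → ℕ, StrictMono φ ∧
            ∀ ε > (0:ℝ), ∃ N : ℕ, ∀ i ≥ N, ∀ j ≥ N,
              ρ (fun τ => S τ (x (φ i))) (fun τ => S τ (x (φ j))) < ε) ∧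
        (∀ y₁ ∈ B, ∀ y₂ ∈ B,
          dist (S T y₁) (S T y₂) ≤ q * dist y₁ y₂ +
            ρ (fun τ => S τ y₁) (fun τ => S τ y₂))) :
    AsymptoticallySmooth S := by
  obtain ⟨hS0, hsemi, -⟩ := hS
  intro D hDb hDinv
  obtain ⟨T, hT, q, hq, ρ, hρ0, hρsymm, hρrefl, hρtri, hprec, hcontr⟩ := hcrit D hDb hDinv
  obtain ⟨hq0, hq1⟩ := hq
  have h1q : (0:ℝ) < 1 - q := by linarith
  have hDmem : ∀ t ≥ (0:ℝ), ∀ u ∈ D, S t u ∈ D := fun t ht u hu => hDinv t ht ⟨u, hu, rfl⟩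
  obtain ⟨C, hC⟩ := Metric.isBounded_iff.mp hDb
  set R : ℝ := max C 0 with hRdef
  have hR0 : 0 ≤ R := le_max_right _ _
  have hR : ∀ u ∈ D, ∀ v ∈ D, dist u v ≤ R := fun u hu v hv =>
    le_trans (hC hu hv) (le_max_left _ _)
  -- iterated contraction estimate
  have hiter : ∀ M : ℝ, 0 ≤ M → ∀ j : ℕ, ∀ a ∈ D, ∀ b ∈ D,
      (∀ l < j, ρ (fun τ => S τ (S ((l:ℝ)*T) a)) (fun τ => S τ (S ((l:ℝ)*T) b)) ≤ M) →
      dist (S ((j:ℝ)*T) a) (S ((j:ℝ)*T) b) ≤ q^j * dist a b + M/(1-q) := by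
    intro M hM j
    induction j with
    | zero =>
      intro a _ b _ _
      simp only [Nat.cast_zero, zero_mul, hS0, pow_zero, one_mul]
      have : 0 ≤ M/(1-q) := div_nonneg hM h1q.le
      linarith
    | succ j ih =>
      intro a ha b hb h
      have hA : S ((j:ℝ)*T) a ∈ D := hDmem _ (by positivity) _ ha
      have hB : S ((j:ℝ)*T) b ∈ D := hDmem _ (by positivity) _ hb
      have hrw : ∀ c : X, S (((j+1:ℕ):ℝ)*T) c = S T (S ((j:ℝ)*T) c) := by
        intro c
        have h2 : (((j+1:ℕ):ℝ))*T = T + (j:ℝ)*T := by push_cast; ring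
        rw [h2, hsemi T hT.le ((j:ℝ)*T) (by positivity) c]
      have hih := ih a ha b hb (fun l hl => h l (Nat.lt_succ_of_lt hl))
      have hc := hcontr _ hA _ hB
      have hρM := h j (Nat.lt_succ_self j)
      calc dist (S (((j+1:ℕ):ℝ)*T) a) (S (((j+1:ℕ):ℝ)*T) b)
          = dist (S T (S ((j:ℝ)*T) a)) (S T (S ((j:ℝ)*T) b)) := by rw [hrw, hrw]
        _ ≤ q * dist (S ((j:ℝ)*T) a) (S ((j:ℝ)*T) b) +
            ρ (fun τ => S τ (S ((j:ℝ)*T) a)) (fun τ => S τ (S ((j:ℝ)*T) b)) := hc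
        _ ≤ q * (q^j * dist a b + M/(1-q)) + M := by
            have := mul_le_mul_of_nonneg_left hih hq0.le
            linarith
        _ = q^(j+1) * dist a b + M/(1-q) := by
            field_simp
            ring
  -- diagonal extraction
  have hdiag : ∀ x : ℕ → ℕ → X, (∀ j n, x j n ∈ D) →
      ∃ φ : ℕ → ℕ, StrictMono φ ∧ ∀ j : ℕ, ∀ ε > (0:ℝ), ∃ N, ∀ i ≥ N, ∀ k ≥ N,
        ρ (fun τ => S τ (x j (φ i))) (fun τ => S τ (x j (φ k))) < ε := by
    intro x hx
    have hE : ∀ ψ : ℕ → ℕ, ∀ j : ℕ, ∃ e : ℕ → ℕ, StrictMono e ∧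
        ∀ ε > (0:ℝ), ∃ N, ∀ i ≥ N, ∀ k ≥ N,
          ρ (fun τ => S τ (x j (ψ (e i)))) (fun τ => S τ (x j (ψ (e k)))) < ε := by
      intro ψ j
      obtain ⟨e, he, hce⟩ := hprec (fun n => x j (ψ n)) (fun n => hx j (ψ n))
      exact ⟨e, he, hce⟩
    choose E hE1 hE2 using hE
    set Ψ : ℕ → (ℕ → ℕ) := fun j => Nat.rec (E id 0) (fun j ψ => ψ ∘ E ψ (j+1)) j with hΨdef
    have hΨs : ∀ j, Ψ (j+1) = (Ψ j) ∘ E (Ψ j) (j+1) := fun j => rfl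
    have hΨmono : ∀ j, StrictMono (Ψ j) := by
      intro j
      induction j with
      | zero => exact hE1 id 0
      | succ j ih => exact ih.comp (hE1 (Ψ j) (j+1))
    have hΨc : ∀ j : ℕ, ∀ ε > (0:ℝ), ∃ N, ∀ i ≥ N, ∀ k ≥ N,
        ρ (fun τ => S τ (x j (Ψ j i))) (fun τ => S τ (x j (Ψ j k))) < ε := by
      intro j
      cases j with
      | zero => exact hE2 id 0
      | succ j => exact hE2 (Ψ j) (j+1)
    have hchain : ∀ k : ℕ, ∀ j ≤ k, ∀ i : ℕ, ∃ n, i ≤ n ∧ Ψ k i = Ψ j n := by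
      intro k
      induction k with
      | zero =>
        intro j hj i
        have : j = 0 := Nat.le_zero.mp hj
        exact ⟨i, le_rfl, by rw [this]⟩
      | succ k ih =>
        intro j hj i
        rcases Nat.eq_or_lt_of_le hj with h | h
        · exact ⟨i, le_rfl, by rw [h]⟩
        · have hj' : j ≤ k := Nat.lt_succ_iff.mp h
          obtain ⟨n, hn, heq⟩ := ih j hj' (E (Ψ k) (k+1) i)
          exact ⟨n, le_trans (StrictMono.le_apply (hE1 (Ψ k) (k+1))) hn, heq⟩
    refine ⟨fun k => Ψ k k, ?_, ?_⟩
    · apply strictMono_nat_of_lt_succ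
      intro k
      have h1 : k < E (Ψ k) (k+1) (k+1) :=
        lt_of_lt_of_le (Nat.lt_succ_self k) (StrictMono.le_apply (hE1 (Ψ k) (k+1)))
      exact hΨmono k h1
    · intro j ε hε
      obtain ⟨N, hN⟩ := hΨc j ε hε
      refine ⟨max j N, ?_⟩
      intro i hi k hk
      obtain ⟨ni, hni, hei⟩ := hchain i j (le_trans (le_max_left _ _) hi) i
      obtain ⟨nk, hnk, hek⟩ := hchain k j (le_trans (le_max_left _ _) hk) k
      show ρ (fun τ => S τ (x j (Ψ i i))) (fun τ => S τ (x j (Ψ k k))) < ε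
      rw [hei, hek]
      exact hN ni (le_trans (le_trans (le_max_right _ _) hi) hni)
        nk (le_trans (le_trans (le_max_right _ _) hk) hnk)
  -- the Cauchy subsequence claim for discrete times
  have hstar : ∀ (z : ℕ → X) (m : ℕ → ℕ), (∀ n, z n ∈ D) → (∀ n, n ≤ m n) →
      ∃ φ : ℕ → ℕ, StrictMono φ ∧
        CauchySeq (fun k => S ((m (φ k) : ℝ) * T) (z (φ k))) := by
    intro z m hz hm
    set x : ℕ → ℕ → X := fun j n => S (((m n - j : ℕ) : ℝ) * T) (z n) with hxdef
    have hxD : ∀ j n, x j n ∈ D := fun j n => hDmem _ (by positivity) _ (hz n)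
    obtain ⟨φ, hφ, hφc⟩ := hdiag x hxD
    refine ⟨φ, hφ, ?_⟩
    rw [Metric.cauchySeq_iff]
    intro ε hε
    obtain ⟨j, hj⟩ : ∃ j : ℕ, q ^ j * R < ε / 2 := by
      obtain ⟨j, hj⟩ := exists_pow_lt_of_lt_one (show (0:ℝ) < (ε/2)/(R+1) by positivity) hq1
      refine ⟨j, ?_⟩
      have h2 : q ^ j * (R + 1) < (ε/2)/(R+1) * (R+1) :=
        mul_lt_mul_of_pos_right hj (by positivity)
      have h3 : (ε/2)/(R+1) * (R+1) = ε/2 := div_mul_cancel₀ _ (by positivity)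
      nlinarith [pow_nonneg hq0.le j]
    set M : ℝ := ε * (1-q) / 2 with hMdef
    have hM : 0 < M := by positivity
    have hNs : ∀ l : ℕ, ∃ N, ∀ i ≥ N, ∀ k ≥ N,
        ρ (fun τ => S τ (x l (φ i))) (fun τ => S τ (x l (φ k))) < M :=
      fun l => hφc l M hM
    choose Nf hNf using hNs
    set N₀ : ℕ := (Finset.range (j+1)).sup Nf + j with hN₀def
    have hN₀j : j ≤ N₀ := Nat.le_add_left j _
    refine ⟨N₀, ?_⟩
    intro i hi k hk
    have hji : j ≤ m (φ i) :=
      le_trans (le_trans hN₀j hi) (le_trans (StrictMono.le_apply hφ) (hm (φ i)))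
    have hjk : j ≤ m (φ k) :=
      le_trans (le_trans hN₀j hk) (le_trans (StrictMono.le_apply hφ) (hm (φ k)))
    have hrw : ∀ n, j ≤ m n → S ((m n : ℝ) * T) (z n) = S ((j:ℝ)*T) (x j n) := by
      intro n hn
      have h1 : ((m n : ℕ) : ℝ) * T = (j:ℝ)*T + ((m n - j : ℕ):ℝ)*T := by
        rw [Nat.cast_sub hn]; ring
      rw [h1, hsemi ((j:ℝ)*T) (by positivity) (((m n - j : ℕ):ℝ)*T) (by positivity)]
    have hlev : ∀ l < j, ∀ n, j ≤ m n → S ((l:ℝ)*T) (x j n) = x (j-l) n := by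
      intro l hl n hn
      have h1 : (m n - (j - l)) = l + (m n - j) := by omega
      have h2 : ((m n - (j-l) : ℕ) : ℝ) * T = (l:ℝ)*T + ((m n - j : ℕ):ℝ)*T := by
        rw [h1]; push_cast; ring
      show S ((l:ℝ)*T) (S (((m n - j : ℕ):ℝ)*T) (z n)) = S (((m n - (j-l) : ℕ):ℝ)*T) (z n)
      rw [h2, hsemi ((l:ℝ)*T) (by positivity) (((m n - j : ℕ):ℝ)*T) (by positivity)]
    have hρcond : ∀ l < j,
        ρ (fun τ => S τ (S ((l:ℝ)*T) (x j (φ i)))) (fun τ => S τ (S ((l:ℝ)*T) (x j (φ k)))) ≤ M := by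
      intro l hl
      rw [hlev l hl (φ i) hji, hlev l hl (φ k) hjk]
      have hmem : j - l ∈ Finset.range (j+1) := Finset.mem_range.mpr (by omega)
      have hle : Nf (j-l) ≤ N₀ := le_trans (Finset.le_sup hmem) (Nat.le_add_right _ _)
      exact (hNf (j-l) i (le_trans hle hi) k (le_trans hle hk)).le
    have hd := hiter M hM.le j (x j (φ i)) (hxD j (φ i)) (x j (φ k)) (hxD j (φ k)) hρcond
    have hMq : M / (1-q) = ε/2 := by
      rw [hMdef]; field_simp
    have hdR : dist (x j (φ i)) (x j (φ k)) ≤ R := hR _ (hxD j (φ i)) _ (hxD j (φ k))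
    have hqj : 0 ≤ q ^ j := pow_nonneg hq0.le j
    calc dist (S ((m (φ i) : ℝ)*T) (z (φ i))) (S ((m (φ k) : ℝ)*T) (z (φ k)))
        = dist (S ((j:ℝ)*T) (x j (φ i))) (S ((j:ℝ)*T) (x j (φ k))) := by
          rw [hrw (φ i) hji, hrw (φ k) hjk]
      _ ≤ q^j * dist (x j (φ i)) (x j (φ k)) + M/(1-q) := hd
      _ ≤ q^j * R + ε/2 := by rw [hMq] at hd ⊢; nlinarith
      _ < ε := by linarith
  -- key: convergent subsequences for arbitrary sequences with times → ∞
  have hkey : ∀ (u : ℕ → X) (t : ℕ → ℝ), (∀ n, u n ∈ D) → (∀ n, 0 ≤ t n) →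
      Tendsto t atTop atTop →
      ∃ χ : ℕ → ℕ, StrictMono χ ∧ ∃ x : X,
        Tendsto (fun k => S (t (χ k)) (u (χ k))) atTop (nhds x) := by
    intro u t hu ht htt
    obtain ⟨ψ, hψ, hψt⟩ := extraction_forall_of_eventually
      (P := fun (n : ℕ) (k : ℕ) => ((n:ℝ)+1)*T ≤ t k)
      (fun n => htt.eventually_ge_atTop _)
    set m : ℕ → ℕ := fun n => ⌊t (ψ n) / T⌋₊ with hmdef
    have hmT : ∀ n, (m n : ℝ) * T ≤ t (ψ n) := by
      intro n
      have h0 : 0 ≤ t (ψ n) / T := div_nonneg (ht _) hT.le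
      have := Nat.floor_le h0
      calc (m n : ℝ) * T ≤ (t (ψ n) / T) * T := by nlinarith
        _ = t (ψ n) := by field_simp
    have hmn : ∀ n, n ≤ m n := by
      intro n
      have h1 : ((n:ℝ)+1)*T ≤ t (ψ n) := hψt n
      rw [hmdef]
      rw [Nat.le_floor_iff (div_nonneg (ht _) hT.le)]
      rw [le_div_iff₀ hT]
      nlinarith [hT.le]
    set z : ℕ → X := fun n => S (t (ψ n) - (m n : ℝ)*T) (u (ψ n)) with hzdef
    have hzD : ∀ n, z n ∈ D := fun n =>
      hDmem _ (by linarith [hmT n]) _ (hu (ψ n))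
    have hrw : ∀ n, S (t (ψ n)) (u (ψ n)) = S ((m n : ℝ)*T) (z n) := by
      intro n
      have h1 : t (ψ n) = (m n : ℝ)*T + (t (ψ n) - (m n : ℝ)*T) := by ring
      rw [hzdef]
      conv_lhs => rw [h1]
      exact hsemi ((m n : ℝ)*T) (by positivity) _ (by linarith [hmT n]) _
    obtain ⟨φ, hφ, hcs⟩ := hstar z m hzD hmn
    have heq : (fun k => S (t (ψ (φ k))) (u (ψ (φ k)))) =
        fun k => S ((m (φ k) : ℝ)*T) (z (φ k)) := funext fun k => hrw (φ k)
    have hcs' : CauchySeq (fun k => S (t (ψ (φ k))) (u (ψ (φ k)))) := by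
      rw [heq]; exact hcs
    obtain ⟨x, hx⟩ := cauchySeq_tendsto_of_complete hcs'
    exact ⟨ψ ∘ φ, hψ.comp hφ, x, hx⟩
  -- define K
  set K : Set X := {x | ∃ u : ℕ → X, ∃ t : ℕ → ℝ, (∀ n, u n ∈ D) ∧ (∀ n, 0 ≤ t n) ∧
      Tendsto t atTop atTop ∧ Tendsto (fun n => S (t n) (u n)) atTop (nhds x)} with hKdef
  refine ⟨K, ?_, ?_, ?_⟩
  · -- K ⊆ closure D
    rintro x ⟨u, t, hu, ht, htt, hconv⟩
    exact mem_closure_of_tendsto hconv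
      (Eventually.of_forall fun n => hDmem _ (ht n) _ (hu n))
  · -- K compact
    apply IsSeqCompact.isCompact
    intro xs hxs
    have happrox : ∀ n : ℕ, ∃ v : X, ∃ s : ℝ, v ∈ D ∧ 0 ≤ s ∧ (n:ℝ) ≤ s ∧
        dist (S s v) (xs n) < 1/((n:ℝ)+1) := by
      intro n
      obtain ⟨u, t, hu, ht, htt, hconv⟩ := hxs n
      have h1 : ∀ᶠ j in atTop, (n:ℝ) ≤ t j := htt.eventually_ge_atTop _
      have h2 : ∀ᶠ j in atTop, dist (S (t j) (u j)) (xs n) < 1/((n:ℝ)+1) := by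
        have := Metric.tendsto_nhds.mp hconv (1/((n:ℝ)+1)) (by positivity)
        exact this
      obtain ⟨j, hj1, hj2⟩ := (h1.and h2).exists
      exact ⟨u j, t j, hu j, ht j, hj1, hj2⟩
    choose v s hv hs0 hsn hdist using happrox
    have hstend : Tendsto s atTop atTop :=
      tendsto_atTop_mono hsn tendsto_natCast_atTop_atTop
    obtain ⟨χ, hχ, x, hxlim⟩ := hkey v s hv hs0 hstend
    have hxK : x ∈ K := ⟨v ∘ χ, s ∘ χ, fun n => hv _, fun n => hs0 _,
      hstend.comp hχ.tendsto_atTop, hxlim⟩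
    refine ⟨x, hxK, χ, hχ, ?_⟩
    rw [tendsto_iff_dist_tendsto_zero]
    apply squeeze_zero (fun k => dist_nonneg)
      (g := fun k => 1/((χ k : ℝ)+1) + dist (S (s (χ k)) (v (χ k))) x)
    · intro k
      have h1 := dist_triangle (xs (χ k)) (S (s (χ k)) (v (χ k))) x
      have h2 := hdist (χ k)
      rw [dist_comm (xs (χ k)) (S (s (χ k)) (v (χ k)))] at h1
      simp only [Function.comp_apply]
      linarith
    · have ha : Tendsto (fun k => 1/((χ k : ℝ)+1)) atTop (nhds 0) :=
        tendsto_one_div_add_atTop_nhds_zero_nat.comp hχ.tendsto_atTop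
      have hb : Tendsto (fun k => dist (S (s (χ k)) (v (χ k))) x) atTop (nhds 0) :=
        tendsto_iff_dist_tendsto_zero.mp hxlim
      simpa using ha.add hb
  · -- Attracts
    unfold Attracts
    by_contra h
    push_neg at h
    obtain ⟨ε, hε, hbad⟩ := h
    have hbad' : ∀ n : ℕ, ∃ t ≥ (n:ℝ), ∃ U ∈ D, ε ≤ Metric.infDist (S t U) K :=
      fun n => hbad (n:ℝ)
    choose t ht U hU hfar using hbad'
    have htt : Tendsto t atTop atTop := tendsto_atTop_mono ht tendsto_natCast_atTop_atTop
    have ht0 : ∀ n, 0 ≤ t n := fun n => le_trans (Nat.cast_nonneg n) (ht n)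
    obtain ⟨χ, hχ, x, hxlim⟩ := hkey U t hU ht0 htt
    have hxK : x ∈ K := ⟨U ∘ χ, t ∘ χ, fun n => hU _, fun n => ht0 _,
      htt.comp hχ.tendsto_atTop, hxlim⟩
    have hge : ∀ k, ε ≤ dist (S (t (χ k)) (U (χ k))) x := fun k =>
      le_trans (hfar (χ k)) (Metric.infDist_le_dist_of_mem hxK)
    have hd0 : Tendsto (fun k => dist (S (t (χ k)) (U (χ k))) x) atTop (nhds 0) :=
      tendsto_iff_dist_tendsto_zero.mp hxlim
    obtain ⟨k, hk⟩ := (hd0.eventually (gt_mem_nhds hε)).exists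
    linarith [hge k]
end
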